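/- With notation as above (S - r = (S₀ - r)e^{-βJ}), if J(x,t) → ∞ as t → ∞ uniformly below by (β_m/c₁)∫₁^t I(x₁,τ)dτ → ∞ for some fixed x₁, then ‖S(·,t) - r‖_{L^∞(Ω)} ≤ ‖S₀ - r‖_{L^∞(Ω)} e^{-(β_m/c₁)∫₁^t I(x₁,τ)dτ} → 0 as t → ∞. -/

import Mathlib

open MeasureTheory Filter Topology Set

theorem stmt_3 {X : Type*} [Nonempty X] (β r S₀ : X → ℝ) (S I : X → ℝ → ℝ)
    (βm c₁ : ℝ) (x₁ : X)
    (hβm : 0 < βm) (hc₁ : 0 < c₁)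
    (hβ : ∀ x, βm ≤ β x)
    (hI : ∀ x τ, 0 ≤ I x τ)
    (hIc : ∀ x, Continuous (I x))
    (hHarnack : ∀ τ ≥ (1:ℝ), ∀ x y, I x τ ≤ c₁ * I y τ)
    (hform : ∀ x, ∀ τ ≥ (0:ℝ),
      S x τ - r x = (S₀ x - r x) * Real.exp (-(β x) * ∫ s in (0:ℝ)..τ, I x s))
    (hbdd : BddAbove (Set.range fun x => |S₀ x - r x|))
    (hdiv : Tendsto (fun τ => ∫ s in (1:ℝ)..τ, I x₁ s) atTop atTop) :
    (∀ τ ≥ (1:ℝ), ∀ x, |S x τ - r x| ≤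
      (⨆ y, |S₀ y - r y|) * Real.exp (-(βm / c₁) * ∫ s in (1:ℝ)..τ, I x₁ s)) ∧
    Tendsto (fun τ => (⨆ y, |S₀ y - r y|) *
      Real.exp (-(βm / c₁) * ∫ s in (1:ℝ)..τ, I x₁ s)) atTop (𝓝 0) := by
  have hM : ∀ x, |S₀ x - r x| ≤ ⨆ y, |S₀ y - r y| := fun x => le_ciSup hbdd x
  have hMnn : 0 ≤ ⨆ y, |S₀ y - r y| :=
    le_trans (abs_nonneg _) (hM (Classical.arbitrary X))
  constructor
  · intro τ hτ x
    have h1 : (βm / c₁) * ∫ s in (1:ℝ)..τ, I x₁ s ≤ β x * ∫ s in (0:ℝ)..τ, I x s := by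
      have hJ1 : ∫ s in (1:ℝ)..τ, I x₁ s ≤ c₁ * ∫ s in (1:ℝ)..τ, I x s := by
        rw [← intervalIntegral.integral_const_mul]
        apply intervalIntegral.integral_mono_on hτ ((hIc x₁).intervalIntegrable _ _)
          ((continuous_const.mul (hIc x)).intervalIntegrable _ _)
        intro s hs; exact hHarnack s hs.1 x₁ x
      have hJ2 : ∫ s in (1:ℝ)..τ, I x s ≤ ∫ s in (0:ℝ)..τ, I x s := by
        rw [← intervalIntegral.integral_add_adjacent_intervals
          ((hIc x).intervalIntegrable 0 1) ((hIc x).intervalIntegrable 1 τ)]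
        have h0 : 0 ≤ ∫ s in (0:ℝ)..1, I x s :=
          intervalIntegral.integral_nonneg zero_le_one (fun s _ => hI x s)
        linarith
      have hJnn : 0 ≤ ∫ s in (1:ℝ)..τ, I x s :=
        intervalIntegral.integral_nonneg hτ (fun s _ => hI x s)
      calc (βm / c₁) * ∫ s in (1:ℝ)..τ, I x₁ s
          ≤ (βm / c₁) * (c₁ * ∫ s in (1:ℝ)..τ, I x s) :=
            mul_le_mul_of_nonneg_left hJ1 (by positivity)
        _ = βm * ∫ s in (1:ℝ)..τ, I x s := by field_simp
        _ ≤ β x * ∫ s in (0:ℝ)..τ, I x s := by nlinarith [hβ x, hJ2]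
    rw [hform x τ (by linarith), abs_mul, abs_of_nonneg (Real.exp_nonneg _)]
    apply mul_le_mul (hM x) _ (Real.exp_nonneg _) hMnn
    exact Real.exp_le_exp.2 (by linarith)
  · have h2 : Tendsto (fun τ => Real.exp (-(βm / c₁) * ∫ s in (1:ℝ)..τ, I x₁ s))
        atTop (𝓝 0) := by
      apply Real.tendsto_exp_atBot.comp
      have := tendsto_neg_atTop_atBot.comp (hdiv.const_mul_atTop (show (0:ℝ) < βm / c₁ by positivity))
      simpa [Function.comp_def, neg_mul] using this
    have h3 := h2.const_mul (⨆ y, |S₀ y - r y|)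
    rw [mul_zero] at h3
    exact h3
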